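/- Fix an integer d ≥ 1, T > 0, and functions b, σ : {1,…,d} × ℝ → ℝ satisfying the Lipschitz condition |b(i,x)−b(i,y)| + |σ(i,x)−σ(i,y)| ≤ K|x−y| for some K > 0 and all i, x, y, and assume inf_{i,x} σ(i,x)² > 0. Let φ ∈ ℍ_T, let ν ∈ 𝕄_T, and let (ν_n) be a sequence in 𝕄_T, with kernels K_ν and K_n respectively, such that for every i, K_n(s,i) → K_ν(s,i) as n → ∞ for Lebesgue-almost every s ∈ [0,T]. Then I_T(φ, ν_n) → I_T(φ, ν) as n → ∞. -/

import Mathlib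

open MeasureTheory Filter Topology

/-- A kernel on `[0,T] × {1,…,d}`. -/
def IsMKernel (d : ℕ) (T : ℝ) (K : ℝ → Fin d → ℝ) : Prop :=
  (∀ i : Fin d, Measurable fun s => K s i) ∧
    ∀ s ∈ Set.Icc (0:ℝ) T, (∀ i : Fin d, 0 ≤ K s i) ∧ ∑ i : Fin d, K s i = 1

/-- `φ ∈ ℍ_T`: `φ` is absolutely continuous on `[0,T]` with `φ(0)=0` and derivative
`φd` which is measurable and square-integrable on `[0,T]`. -/
def MemHT (T : ℝ) (φ φd : ℝ → ℝ) : Prop :=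
  φ 0 = 0 ∧ Measurable φd ∧ IntegrableOn (fun s => (φd s) ^ 2) (Set.Icc (0:ℝ) T) ∧
    ∀ t ∈ Set.Icc (0:ℝ) T, φ t = ∫ s in (0:ℝ)..t, φd s

/-- The Freidlin–Wentzell type rate function
`I_T(φ,ν) = (1/2)∫₀ᵀ (φ'(t) − b̂(ν,φ(t)))² / σ̂²(ν,φ(t)) dt`, expressed through the
kernel `K` of `ν`. -/
noncomputable def IT (d : ℕ) (T : ℝ) (b σ : Fin d → ℝ → ℝ) (φ φd : ℝ → ℝ)
    (K : ℝ → Fin d → ℝ) : ℝ :=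
  (1/2) * ∫ t in (0:ℝ)..T,
    (φd t - ∑ i : Fin d, b i (φ t) * K t i) ^ 2 /
      (∑ i : Fin d, (σ i (φ t)) ^ 2 * K t i)

/-- If `b, σ` are Lipschitz in the space variable, `inf_{i,x} σ(i,x)² > 0`, `φ ∈ ℍ_T`,
and the kernels `K_n` of `ν_n ∈ 𝕄_T` converge Lebesgue-a.e. on `[0,T]` to the kernel
`K` of `ν ∈ 𝕄_T`, then `I_T(φ,ν_n) → I_T(φ,ν)`. -/
theorem IT_continuous (d : ℕ) (hd : 1 ≤ d) (T : ℝ) (hT : 0 < T)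
    (b σ : Fin d → ℝ → ℝ) (C : ℝ) (hC : 0 < C)
    (hlip : ∀ i : Fin d, ∀ x y : ℝ,
      |b i x - b i y| + |σ i x - σ i y| ≤ C * |x - y|)
    (hσ : ∃ c : ℝ, 0 < c ∧ ∀ i : Fin d, ∀ x : ℝ, c ≤ (σ i x) ^ 2)
    (φ φd : ℝ → ℝ) (hφ : MemHT T φ φd)
    (ν : C(Set.Icc (0:ℝ) T, Fin d → ℝ)) (νn : ℕ → C(Set.Icc (0:ℝ) T, Fin d → ℝ))
    (K : ℝ → Fin d → ℝ) (Kn : ℕ → ℝ → Fin d → ℝ)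
    (hK : IsMKernel d T K) (hKn : ∀ n : ℕ, IsMKernel d T (Kn n))
    (hνK : ∀ t : Set.Icc (0:ℝ) T, ∀ i : Fin d, ν t i = ∫ s in (0:ℝ)..(t:ℝ), K s i)
    (hνnKn : ∀ n : ℕ, ∀ t : Set.Icc (0:ℝ) T, ∀ i : Fin d,
      νn n t i = ∫ s in (0:ℝ)..(t:ℝ), Kn n s i)
    (hconv : ∀ i : Fin d,
      ∀ᵐ s ∂(volume.restrict (Set.Icc (0:ℝ) T)),
        Tendsto (fun n => Kn n s i) atTop (𝓝 (K s i))) :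
    Tendsto (fun n => IT d T b σ φ φd (Kn n)) atTop (𝓝 (IT d T b σ φ φd K)) := by
  classical
  obtain ⟨c, hc, hσc⟩ := hσ
  obtain ⟨hφ0, hφdm, hφd2, hφrep⟩ := hφ
  -- `φd` is integrable on `[0,T]`
  have hφd1 : IntegrableOn φd (Set.Icc (0:ℝ) T) := by
    have hone : IntegrableOn (fun _ : ℝ => (1:ℝ)) (Set.Icc (0:ℝ) T) :=
      integrableOn_const measure_Icc_lt_top.ne
    have hsum : IntegrableOn (fun s => (φd s) ^ 2 + 1) (Set.Icc (0:ℝ) T) := hφd2.add hone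
    refine hsum.mono' hφdm.aestronglyMeasurable.restrict (ae_of_all _ fun s => ?_)
    simp only [Real.norm_eq_abs]
    nlinarith [sq_nonneg (|φd s| - 1), sq_abs (φd s)]
  set φd' : ℝ → ℝ := (Set.Icc (0:ℝ) T).indicator φd with hφd'def
  have hφd'int : Integrable φd' := hφd1.integrable_indicator measurableSet_Icc
  set ψ : ℝ → ℝ := fun t => ∫ s in (0:ℝ)..t, φd' s with hψdef
  have hψcont : Continuous ψ :=
    intervalIntegral.continuous_primitive (fun a b => hφd'int.intervalIntegrable) 0
  have hψφ : ∀ t ∈ Set.Icc (0:ℝ) T, φ t = ψ t := by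
    intro t ht
    rw [hφrep t ht]
    refine intervalIntegral.integral_congr fun s hs => ?_
    rw [Set.uIcc_of_le ht.1] at hs
    have hmem : s ∈ Set.Icc (0:ℝ) T := ⟨hs.1, hs.2.trans ht.2⟩
    exact (Set.indicator_of_mem hmem φd).symm
  set M : ℝ := ∫ x, |φd' x| with hMdef
  have hM0 : 0 ≤ M := integral_nonneg fun x => abs_nonneg _
  have hψbd : ∀ t ∈ Set.Icc (0:ℝ) T, |ψ t| ≤ M := by
    intro t ht
    calc |ψ t| ≤ ∫ s in (0:ℝ)..t, |φd' s| :=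
          intervalIntegral.abs_integral_le_integral_abs ht.1
      _ ≤ M := by
          rw [intervalIntegral.integral_of_le ht.1]
          exact setIntegral_le_integral hφd'int.abs (ae_of_all _ fun x => abs_nonneg _)
  set Bsum : ℝ := ∑ i : Fin d, (|b i 0| + C * M) with hBdef
  have hBi : ∀ i : Fin d, ∀ x : ℝ, |x| ≤ M → |b i x| ≤ |b i 0| + C * M := by
    intro i x hx
    have h1 := hlip i x 0
    have h2 : |b i x - b i 0| ≤ C * |x - 0| := by
      have := abs_nonneg (σ i x - σ i 0); linarith
    have h3 : |x - 0| ≤ M := by simpa using hx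
    calc |b i x| = |(b i x - b i 0) + b i 0| := by ring_nf
      _ ≤ |b i x - b i 0| + |b i 0| := abs_add_le _ _
      _ ≤ |b i 0| + C * M := by nlinarith
  have hker_le_one : ∀ (k : Fin d → ℝ), (∀ i, 0 ≤ k i) → (∑ i, k i) = 1 →
      ∀ i, k i ≤ 1 := by
    intro k hk hks i
    calc k i ≤ ∑ j, k j := Finset.single_le_sum (fun j _ => hk j) (Finset.mem_univ i)
      _ = 1 := hks
  have hSb : ∀ (x : ℝ), |x| ≤ M → ∀ (k : Fin d → ℝ), (∀ i, 0 ≤ k i) → (∑ i, k i) = 1 →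
      |∑ i : Fin d, b i x * k i| ≤ Bsum := by
    intro x hx k hk hks
    calc |∑ i : Fin d, b i x * k i| ≤ ∑ i : Fin d, |b i x * k i| :=
          Finset.abs_sum_le_sum_abs _ _
      _ ≤ ∑ i : Fin d, (|b i 0| + C * M) := by
          refine Finset.sum_le_sum fun i _ => ?_
          rw [abs_mul, abs_of_nonneg (hk i)]
          have h1 := hBi i x hx
          have h2 := hker_le_one k hk hks i
          have hb0 : (0:ℝ) ≤ |b i 0| := abs_nonneg _
          nlinarith [abs_nonneg (b i x), hk i]
      _ = Bsum := hBdef.symm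
  have hBsum0 : 0 ≤ Bsum := le_trans (abs_nonneg _) (by
    obtain ⟨hk0, hk1⟩ := hK.2 0 ⟨le_refl _, hT.le⟩
    exact hSb 0 (by simpa using hM0) (K 0) hk0 hk1)
  have hSd : ∀ (x : ℝ) (k : Fin d → ℝ), (∀ i, 0 ≤ k i) → (∑ i, k i) = 1 →
      c ≤ ∑ i : Fin d, (σ i x) ^ 2 * k i := by
    intro x k hk hks
    calc c = ∑ i : Fin d, c * k i := by rw [← Finset.mul_sum, hks, mul_one]
      _ ≤ ∑ i : Fin d, (σ i x) ^ 2 * k i :=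
          Finset.sum_le_sum fun i _ => mul_le_mul_of_nonneg_right (hσc i x) (hk i)
  have hIoc : Set.Ioc (0:ℝ) T ⊆ Set.Icc (0:ℝ) T := Set.Ioc_subset_Icc_self
  -- continuity of `b i` and `σ i`
  have hbc : ∀ i : Fin d, Continuous (b i) := by
    intro i
    refine (LipschitzWith.of_dist_le_mul (K := ⟨C, hC.le⟩) fun x y => ?_).continuous
    have h1 := hlip i x y
    have h2 := abs_nonneg (σ i x - σ i y)
    simp only [Real.dist_eq, NNReal.coe_mk]
    change _ ≤ C * _
    linarith
  have hsc : ∀ i : Fin d, Continuous (σ i) := by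
    intro i
    refine (LipschitzWith.of_dist_le_mul (K := ⟨C, hC.le⟩) fun x y => ?_).continuous
    have h1 := hlip i x y
    have h2 := abs_nonneg (b i x - b i y)
    simp only [Real.dist_eq, NNReal.coe_mk]
    change _ ≤ C * _
    linarith
  -- main convergence of the set integrals via dominated convergence
  have key : Tendsto (fun n => ∫ t in Set.Ioc (0:ℝ) T,
      (φd t - ∑ i : Fin d, b i (φ t) * Kn n t i) ^ 2 /
        (∑ i : Fin d, (σ i (φ t)) ^ 2 * Kn n t i)) atTop
      (𝓝 (∫ t in Set.Ioc (0:ℝ) T,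
      (φd t - ∑ i : Fin d, b i (φ t) * K t i) ^ 2 /
        (∑ i : Fin d, (σ i (φ t)) ^ 2 * K t i))) := by
    refine tendsto_integral_of_dominated_convergence
      (fun t => (2 * (φd t) ^ 2 + 2 * Bsum ^ 2) / c) ?_ ?_ ?_ ?_
    · -- measurability
      intro n
      have hGm : AEStronglyMeasurable (fun t =>
          (φd t - ∑ i : Fin d, b i (ψ t) * Kn n t i) ^ 2 /
            (∑ i : Fin d, (σ i (ψ t)) ^ 2 * Kn n t i))
          (volume.restrict (Set.Ioc (0:ℝ) T)) := by
        refine Measurable.aestronglyMeasurable (Measurable.div ?_ ?_)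
        · exact (hφdm.sub (Finset.measurable_sum _ fun i _ =>
            (((hbc i).measurable.comp hψcont.measurable).mul ((hKn n).1 i)))).pow_const 2
        · exact Finset.measurable_sum _ fun i _ =>
            ((((hsc i).measurable.comp hψcont.measurable).pow_const 2).mul ((hKn n).1 i))
      refine hGm.congr ?_
      refine (ae_restrict_iff' measurableSet_Ioc).2 (ae_of_all _ fun t ht => ?_)
      simp only [hψφ t (hIoc ht)]
    · -- integrability of the bound
      have h1 : IntegrableOn (fun t => (φd t) ^ 2) (Set.Ioc (0:ℝ) T) := hφd2.mono_set hIoc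
      have h2 : IntegrableOn (fun _ : ℝ => 2 * Bsum ^ 2) (Set.Ioc (0:ℝ) T) :=
        integrableOn_const measure_Ioc_lt_top.ne
      exact ((h1.const_mul 2).add h2).div_const c
    · -- uniform bound
      intro n
      refine (ae_restrict_iff' measurableSet_Ioc).2 (ae_of_all _ fun t ht => ?_)
      have htS := hIoc ht
      obtain ⟨hk0, hk1⟩ := (hKn n).2 t htS
      have hφM : |φ t| ≤ M := by rw [hψφ t htS]; exact hψbd t htS
      have hden : c ≤ ∑ i : Fin d, (σ i (φ t)) ^ 2 * Kn n t i := hSd _ _ hk0 hk1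
      have hnum0 : (0:ℝ) ≤ (φd t - ∑ i : Fin d, b i (φ t) * Kn n t i) ^ 2 := sq_nonneg _
      have hS := hSb (φ t) hφM _ hk0 hk1
      have hs2 : (∑ i : Fin d, b i (φ t) * Kn n t i) ^ 2 ≤ Bsum ^ 2 := by
        rw [← sq_abs]; exact pow_le_pow_left₀ (abs_nonneg _) hS 2
      rw [Real.norm_eq_abs, abs_of_nonneg (div_nonneg hnum0 (le_trans hc.le hden))]
      calc (φd t - ∑ i : Fin d, b i (φ t) * Kn n t i) ^ 2 /
            (∑ i : Fin d, (σ i (φ t)) ^ 2 * Kn n t i)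
          ≤ (φd t - ∑ i : Fin d, b i (φ t) * Kn n t i) ^ 2 / c :=
            div_le_div_of_nonneg_left hnum0 hc hden
        _ ≤ (2 * (φd t) ^ 2 + 2 * Bsum ^ 2) / c := by
            gcongr
            nlinarith [sq_nonneg (φd t + ∑ i : Fin d, b i (φ t) * Kn n t i)]
    · -- a.e. pointwise convergence
      have hconvall : ∀ᵐ s ∂(volume.restrict (Set.Icc (0:ℝ) T)),
          ∀ i, Tendsto (fun n => Kn n s i) atTop (𝓝 (K s i)) := ae_all_iff.2 hconv
      have h1 := ae_restrict_of_ae_restrict_of_subset hIoc hconvall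
      have h2 := ae_restrict_mem (μ := volume) measurableSet_Ioc (s := Set.Ioc (0:ℝ) T)
      filter_upwards [h1, h2] with t hti htmem
      have htS := hIoc htmem
      obtain ⟨hk0, hk1⟩ := hK.2 t htS
      have hden : c ≤ ∑ i : Fin d, (σ i (φ t)) ^ 2 * K t i := hSd _ _ hk0 hk1
      have hdenne : (∑ i : Fin d, (σ i (φ t)) ^ 2 * K t i) ≠ 0 :=
        (lt_of_lt_of_le hc hden).ne'
      have hnum : Tendsto (fun n => (φd t - ∑ i : Fin d, b i (φ t) * Kn n t i) ^ 2) atTop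
          (𝓝 ((φd t - ∑ i : Fin d, b i (φ t) * K t i) ^ 2)) :=
        (tendsto_const_nhds.sub (tendsto_finset_sum _ fun i _ =>
          tendsto_const_nhds.mul (hti i))).pow 2
      have hd : Tendsto (fun n => ∑ i : Fin d, (σ i (φ t)) ^ 2 * Kn n t i) atTop
          (𝓝 (∑ i : Fin d, (σ i (φ t)) ^ 2 * K t i)) :=
        tendsto_finset_sum _ fun i _ => tendsto_const_nhds.mul (hti i)
      exact hnum.div hd hdenne
  have hIT : ∀ (Kk : ℝ → Fin d → ℝ), IT d T b σ φ φd Kk =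
      (1/2) * ∫ t in Set.Ioc (0:ℝ) T, (φd t - ∑ i : Fin d, b i (φ t) * Kk t i) ^ 2 /
        (∑ i : Fin d, (σ i (φ t)) ^ 2 * Kk t i) := by
    intro Kk
    rw [IT, intervalIntegral.integral_of_le hT.le]
  simp only [hIT]
  exact key.const_mul (1/2)
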